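/- arXiv:2601.10924 — 4 statements merged into one kernel-verified Lean document; each statement's English description precedes it below -/
import Mathlib

section
/- Let θ : ℝ → ℝ be continuously differentiable, let A : ℝ³ → ℝ be continuous, and let u : ℝ³ → ℂ be continuously differentiable with compact support. Set v := u ∘ 𝔏 and Ã := A ∘ 𝔏, where 𝔏 is the twist map associated with θ. Then ∫_{ℝ³} ( |∂₁u|² + |i·∂₂u + A·u|² + |∂₃u|² ) dx = ∫_{ℝ³} ( |i·∂_{t₂}v + Ã·v·cos θ(s)|² + |i·∂_{t₃}v + Ã·v·sin θ(s)|² + |∂_s v + θ'(s)·∂_α v|² ) ds dt₂ dt₃, where both integrals are with respect to Lebesgue measure on ℝ³. (This is the change of variables bringing the magnetic quadratic form with vector potential (0,A,0) on the twisted tube into straightened coordinates.) -/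
open MeasureTheory

/-- The twist map `𝔏(s,t₂,t₃) = (s, t₂cos θ(s) + t₃ sin θ(s), t₃cos θ(s) − t₂ sin θ(s))`. -/
noncomputable def twistMap (θ : ℝ → ℝ) (p : ℝ × ℝ × ℝ) : ℝ × ℝ × ℝ :=
  (p.1,
   p.2.1 * Real.cos (θ p.1) + p.2.2 * Real.sin (θ p.1),
   p.2.2 * Real.cos (θ p.1) - p.2.1 * Real.sin (θ p.1))

/-- Partial derivative in the first coordinate of a function on `ℝ³`. -/
noncomputable def pd1 {E : Type*} [NormedAddCommGroup E] [NormedSpace ℝ E]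
    (F : ℝ × ℝ × ℝ → E) (p : ℝ × ℝ × ℝ) : E :=
  deriv (fun x => F (x, p.2.1, p.2.2)) p.1

/-- Partial derivative in the second coordinate of a function on `ℝ³`. -/
noncomputable def pd2 {E : Type*} [NormedAddCommGroup E] [NormedSpace ℝ E]
    (F : ℝ × ℝ × ℝ → E) (p : ℝ × ℝ × ℝ) : E :=
  deriv (fun x => F (p.1, x, p.2.2)) p.2.1

/-- Partial derivative in the third coordinate of a function on `ℝ³`. -/
noncomputable def pd3 {E : Type*} [NormedAddCommGroup E] [NormedSpace ℝ E]
    (F : ℝ × ℝ × ℝ → E) (p : ℝ × ℝ × ℝ) : E :=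
  deriv (fun x => F (p.1, p.2.1, x)) p.2.2

/-- The angular derivative `∂_α F := t₂ ∂_{t₃}F − t₃ ∂_{t₂}F` of a function on `ℝ³`. -/
noncomputable def angDeriv (F : ℝ × ℝ × ℝ → ℂ) (p : ℝ × ℝ × ℝ) : ℂ :=
  (p.2.1 : ℂ) * pd3 F p - (p.2.2 : ℂ) * pd2 F p

lemma lin3 (L : ℝ × ℝ × ℝ →L[ℝ] ℂ) (a b c : ℝ) :
    L (a, b, c) = (a : ℂ) * L (1, 0, 0) + (b : ℂ) * L (0, 1, 0) + (c : ℂ) * L (0, 0, 1) := by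
  have h : ((a, b, c) : ℝ × ℝ × ℝ)
      = a • ((1, 0, 0) : ℝ × ℝ × ℝ) + b • (0, 1, 0) + c • (0, 0, 1) := by
    simp [Prod.ext_iff]
  rw [h, map_add, map_add, _root_.map_smul, _root_.map_smul, _root_.map_smul]
  simp [Complex.real_smul]

lemma pd1_eq (u : ℝ × ℝ × ℝ → ℂ) (hu : Differentiable ℝ u) (p : ℝ × ℝ × ℝ) :
    pd1 u p = fderiv ℝ u p (1, 0, 0) := by
  have h : HasDerivAt (fun x : ℝ => ((x, p.2.1, p.2.2) : ℝ × ℝ × ℝ)) (1, 0, 0) p.1 :=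
    (hasDerivAt_id p.1).prodMk ((hasDerivAt_const _ _).prodMk (hasDerivAt_const _ _))
  have := ((hu p).hasFDerivAt.comp_hasDerivAt p.1 h)
  exact this.deriv

lemma pd2_eq (u : ℝ × ℝ × ℝ → ℂ) (hu : Differentiable ℝ u) (p : ℝ × ℝ × ℝ) :
    pd2 u p = fderiv ℝ u p (0, 1, 0) := by
  have h : HasDerivAt (fun x : ℝ => ((p.1, x, p.2.2) : ℝ × ℝ × ℝ)) (0, 1, 0) p.2.1 :=
    (hasDerivAt_const _ _).prodMk ((hasDerivAt_id _).prodMk (hasDerivAt_const _ _))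
  exact ((hu p).hasFDerivAt.comp_hasDerivAt p.2.1 h).deriv

lemma pd3_eq (u : ℝ × ℝ × ℝ → ℂ) (hu : Differentiable ℝ u) (p : ℝ × ℝ × ℝ) :
    pd3 u p = fderiv ℝ u p (0, 0, 1) := by
  have h : HasDerivAt (fun x : ℝ => ((p.1, p.2.1, x) : ℝ × ℝ × ℝ)) (0, 0, 1) p.2.2 :=
    (hasDerivAt_const _ _).prodMk ((hasDerivAt_const _ _).prodMk (hasDerivAt_id _))
  exact ((hu p).hasFDerivAt.comp_hasDerivAt p.2.2 h).deriv

lemma rot_norm (c s : ℝ) (h : c ^ 2 + s ^ 2 = 1) (X Y : ℂ) :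
    ‖(c : ℂ) * X - (s : ℂ) * Y‖ ^ 2 + ‖(s : ℂ) * X + (c : ℂ) * Y‖ ^ 2
      = ‖X‖ ^ 2 + ‖Y‖ ^ 2 := by
  simp only [Complex.sq_norm, Complex.normSq_apply,
    Complex.add_re, Complex.add_im, Complex.sub_re, Complex.sub_im,
    Complex.mul_re, Complex.mul_im, Complex.ofReal_re, Complex.ofReal_im]
  ring_nf
  nlinarith [sq_nonneg X.re, sq_nonneg X.im, sq_nonneg Y.re, sq_nonneg Y.im]

lemma twist_injective (θ : ℝ → ℝ) : Function.Injective (twistMap θ) := by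
  intro p q h
  simp only [twistMap, Prod.mk.injEq] at h
  obtain ⟨h1, h2, h3⟩ := h
  have hcs := Real.sin_sq_add_cos_sq (θ p.1)
  rw [← h1] at h2 h3
  refine Prod.ext h1 (Prod.ext ?_ ?_)
  · linear_combination Real.cos (θ p.1) * h2 - Real.sin (θ p.1) * h3
      - (p.2.1 - q.2.1) * hcs
  · linear_combination Real.sin (θ p.1) * h2 + Real.cos (θ p.1) * h3 - (p.2.2 - q.2.2) * hcs

lemma twist_measurePreserving (θ : ℝ → ℝ) (hθ : Continuous θ) :
    MeasurePreserving (twistMap θ) (volume : Measure (ℝ × ℝ × ℝ)) volume := by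
  have key : ∀ s : ℝ, Measure.map (fun t : ℝ × ℝ =>
      ((t.1 * Real.cos (θ s) + t.2 * Real.sin (θ s),
        t.2 * Real.cos (θ s) - t.1 * Real.sin (θ s)) : ℝ × ℝ)) volume = volume := by
    intro s
    set c := Real.cos (θ s) with hc
    set sn := Real.sin (θ s) with hsn
    have hcs : sn ^ 2 + c ^ 2 = 1 := Real.sin_sq_add_cos_sq (θ s)
    set f := Matrix.toLin (Module.Basis.finTwoProd ℝ) (Module.Basis.finTwoProd ℝ) !![c, sn; -sn, c] with hf
    have hdet : LinearMap.det f = 1 := by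
      rw [hf, LinearMap.det_toLin, Matrix.det_fin_two_of]
      nlinarith [hcs]
    have hfun : (fun t : ℝ × ℝ => ((t.1 * c + t.2 * sn, t.2 * c - t.1 * sn) : ℝ × ℝ)) = ⇑f := by
      funext t
      rw [hf, Matrix.toLin_finTwoProd_apply]
      exact Prod.ext (by ring) (by ring)
    rw [hfun, Measure.map_linearMap_addHaar_eq_smul_addHaar volume (by rw [hdet]; norm_num),
      hdet]
    norm_num
  have h2 : MeasurePreserving
      (fun p : ℝ × (ℝ × ℝ) =>
        (p.1, ((p.2.1 * Real.cos (θ p.1) + p.2.2 * Real.sin (θ p.1),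
          p.2.2 * Real.cos (θ p.1) - p.2.1 * Real.sin (θ p.1)) : ℝ × ℝ)))
      ((volume : Measure ℝ).prod (volume : Measure (ℝ × ℝ)))
      ((volume : Measure ℝ).prod (volume : Measure (ℝ × ℝ))) := by
    refine (MeasurePreserving.id volume).skew_product ?_ (Filter.Eventually.of_forall key)
    apply Continuous.measurable
    fun_prop
  rw [← Measure.volume_eq_prod] at h2
  exact h2

lemma key_point (θ : ℝ → ℝ) (hθ : ContDiff ℝ 1 θ)
    (A : ℝ × ℝ × ℝ → ℝ) (u : ℝ × ℝ × ℝ → ℂ) (hu : ContDiff ℝ 1 u) (p : ℝ × ℝ × ℝ) :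
    (‖Complex.I * pd2 (u ∘ twistMap θ) p
        + ((A ∘ twistMap θ) p : ℂ) * (u ∘ twistMap θ) p * (Real.cos (θ p.1) : ℂ)‖ ^ 2
      + ‖Complex.I * pd3 (u ∘ twistMap θ) p
        + ((A ∘ twistMap θ) p : ℂ) * (u ∘ twistMap θ) p * (Real.sin (θ p.1) : ℂ)‖ ^ 2
      + ‖pd1 (u ∘ twistMap θ) p
        + (Complex.ofReal (deriv θ p.1)) * angDeriv (u ∘ twistMap θ) p‖ ^ 2)
    = ‖pd1 u (twistMap θ p)‖ ^ 2
      + ‖Complex.I * pd2 u (twistMap θ p)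
          + (A (twistMap θ p) : ℂ) * u (twistMap θ p)‖ ^ 2
      + ‖pd3 u (twistMap θ p)‖ ^ 2 := by
  have hud : Differentiable ℝ u := hu.differentiable one_ne_zero
  obtain ⟨s, t2, t3⟩ := p
  set c := Real.cos (θ s) with hc
  set sn := Real.sin (θ s) with hsn
  set θ' := deriv θ s with hθ'
  set q : ℝ × ℝ × ℝ := twistMap θ (s, t2, t3) with hq
  set L := fderiv ℝ u q with hL
  -- derivative facts
  have hin2 : HasDerivAt (fun x : ℝ => ((s, x * c + t3 * sn, t3 * c - x * sn) : ℝ × ℝ × ℝ))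
      (0, c, -sn) t2 :=
    (hasDerivAt_const _ _).prodMk (((hasDerivAt_mul_const c).add_const _).prodMk
      (((hasDerivAt_mul_const sn).const_sub _)))
  have hin3 : HasDerivAt (fun x : ℝ => ((s, t2 * c + x * sn, x * c - t2 * sn) : ℝ × ℝ × ℝ))
      (0, sn, c) t3 :=
    (hasDerivAt_const _ _).prodMk (((hasDerivAt_mul_const sn).const_add _).prodMk
      (((hasDerivAt_mul_const c).sub_const _)))
  have hθs : HasDerivAt θ θ' s := (hθ.differentiable one_ne_zero s).hasDerivAt
  have hcos : HasDerivAt (fun x : ℝ => Real.cos (θ x)) (-sn * θ') s :=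
    (Real.hasDerivAt_cos (θ s)).comp s hθs
  have hsin : HasDerivAt (fun x : ℝ => Real.sin (θ x)) (c * θ') s :=
    (Real.hasDerivAt_sin (θ s)).comp s hθs
  have hin1 : HasDerivAt (fun x : ℝ =>
      ((x, t2 * Real.cos (θ x) + t3 * Real.sin (θ x),
        t3 * Real.cos (θ x) - t2 * Real.sin (θ x)) : ℝ × ℝ × ℝ))
      (1, t2 * (-sn * θ') + t3 * (c * θ'), t3 * (-sn * θ') - t2 * (c * θ')) s :=
    (hasDerivAt_id s).prodMk (((hcos.const_mul t2).add (hsin.const_mul t3)).prodMk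
      ((hcos.const_mul t3).sub (hsin.const_mul t2)))
  have hP2 : pd2 (u ∘ twistMap θ) (s, t2, t3)
      = (c : ℂ) * L (0, 1, 0) - (sn : ℂ) * L (0, 0, 1) := by
    have h := ((hud _).hasFDerivAt.comp_hasDerivAt t2 hin2).deriv
    calc pd2 (u ∘ twistMap θ) (s, t2, t3) = L (0, c, -sn) := h
    _ = _ := by rw [lin3]; push_cast; ring
  have hP3 : pd3 (u ∘ twistMap θ) (s, t2, t3)
      = (sn : ℂ) * L (0, 1, 0) + (c : ℂ) * L (0, 0, 1) := by
    have h := ((hud _).hasFDerivAt.comp_hasDerivAt t3 hin3).deriv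
    calc pd3 (u ∘ twistMap θ) (s, t2, t3) = L (0, sn, c) := h
    _ = _ := by rw [lin3]; push_cast; ring
  have hP1 : pd1 (u ∘ twistMap θ) (s, t2, t3)
      = L (1, 0, 0)
        + ((t2 * (-sn * θ') + t3 * (c * θ') : ℝ) : ℂ) * L (0, 1, 0)
        + ((t3 * (-sn * θ') - t2 * (c * θ') : ℝ) : ℂ) * L (0, 0, 1) := by
    have h := ((hud _).hasFDerivAt.comp_hasDerivAt s hin1).deriv
    calc pd1 (u ∘ twistMap θ) (s, t2, t3)
        = L (1, t2 * (-sn * θ') + t3 * (c * θ'), t3 * (-sn * θ') - t2 * (c * θ')) := h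
    _ = _ := by rw [lin3]; push_cast; ring
  have hu1 : pd1 u q = L (1, 0, 0) := pd1_eq u hud q
  have hu2 : pd2 u q = L (0, 1, 0) := pd2_eq u hud q
  have hu3 : pd3 u q = L (0, 0, 1) := pd3_eq u hud q
  have hv : (u ∘ twistMap θ) (s, t2, t3) = u q := rfl
  have hA : (A ∘ twistMap θ) (s, t2, t3) = A q := rfl
  rw [show angDeriv (u ∘ twistMap θ) (s, t2, t3)
      = (t2 : ℂ) * pd3 (u ∘ twistMap θ) (s, t2, t3)
        - (t3 : ℂ) * pd2 (u ∘ twistMap θ) (s, t2, t3) from rfl]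
  rw [hP1, hP2, hP3, hv, hA, hu1, hu2, hu3]
  set X : ℂ := Complex.I * L (0, 1, 0) + (A q : ℂ) * u q with hX
  set Y : ℂ := Complex.I * L (0, 0, 1) with hY
  have e1 : Complex.I * ((c : ℂ) * L (0, 1, 0) - (sn : ℂ) * L (0, 0, 1))
      + (A q : ℂ) * u q * (c : ℂ) = (c : ℂ) * X - (sn : ℂ) * Y := by
    rw [hX, hY]; ring
  have e2 : Complex.I * ((sn : ℂ) * L (0, 1, 0) + (c : ℂ) * L (0, 0, 1))
      + (A q : ℂ) * u q * (sn : ℂ) = (sn : ℂ) * X + (c : ℂ) * Y := by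
    rw [hX, hY]; ring
  have e3 : L (1, 0, 0)
        + ((t2 * (-sn * θ') + t3 * (c * θ') : ℝ) : ℂ) * L (0, 1, 0)
        + ((t3 * (-sn * θ') - t2 * (c * θ') : ℝ) : ℂ) * L (0, 0, 1)
      + (Complex.ofReal θ')
        * ((t2 : ℂ) * ((sn : ℂ) * L (0, 1, 0) + (c : ℂ) * L (0, 0, 1))
          - (t3 : ℂ) * ((c : ℂ) * L (0, 1, 0) - (sn : ℂ) * L (0, 0, 1)))
      = L (1, 0, 0) := by push_cast; ring
  rw [e1, e2, e3]
  have hcs : c ^ 2 + sn ^ 2 = 1 := by rw [hc, hsn]; exact Real.cos_sq_add_sin_sq (θ s)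
  have hrot := rot_norm c sn hcs X Y
  have hYn : ‖Y‖ = ‖L (0, 0, 1)‖ := by
    rw [hY, norm_mul, Complex.norm_I, one_mul]
  rw [hYn] at hrot
  linarith [hrot]

/-- change of variables bringing the magnetic quadratic form with vector
potential `(0,A,0)` on the twisted tube into straightened coordinates:
`∫_{ℝ³} (|∂₁u|² + |i·∂₂u + A·u|² + |∂₃u|²)
  = ∫_{ℝ³} (|i·∂_{t₂}v + Ã·v·cos θ(s)|² + |i·∂_{t₃}v + Ã·v·sin θ(s)|²
      + |∂_s v + θ'(s)·∂_α v|²)`. -/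
theorem stmt_3 (θ : ℝ → ℝ) (hθ : ContDiff ℝ 1 θ)
    (A : ℝ × ℝ × ℝ → ℝ) (hA : Continuous A)
    (u : ℝ × ℝ × ℝ → ℂ) (hu : ContDiff ℝ 1 u) (hu' : HasCompactSupport u)
    (v : ℝ × ℝ × ℝ → ℂ) (hv : v = u ∘ twistMap θ)
    (Atil : ℝ × ℝ × ℝ → ℝ) (hAtil : Atil = A ∘ twistMap θ) :
    ∫ p : ℝ × ℝ × ℝ,
        (‖pd1 u p‖ ^ 2 + ‖Complex.I * pd2 u p + (A p : ℂ) * u p‖ ^ 2 + ‖pd3 u p‖ ^ 2)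
    = ∫ p : ℝ × ℝ × ℝ,
        (‖Complex.I * pd2 v p + (Atil p : ℂ) * v p * (Real.cos (θ p.1) : ℂ)‖ ^ 2
          + ‖Complex.I * pd3 v p + (Atil p : ℂ) * v p * (Real.sin (θ p.1) : ℂ)‖ ^ 2
          + ‖pd1 v p + (Complex.ofReal (deriv θ p.1)) * angDeriv v p‖ ^ 2) := by
  subst hv hAtil
  have hmp := twist_measurePreserving θ hθ.continuous
  have hemb : MeasurableEmbedding (twistMap θ) := by
    have hcont : Continuous (twistMap θ) := by
      have h := hθ.continuous
      unfold twistMap; fun_prop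
    exact hcont.measurableEmbedding (twist_injective θ)
  have h2 := hmp.integral_comp hemb
    (fun p => ‖pd1 u p‖ ^ 2 + ‖Complex.I * pd2 u p + (A p : ℂ) * u p‖ ^ 2 + ‖pd3 u p‖ ^ 2)
  rw [← h2]
  exact integral_congr_ae (Filter.Eventually.of_forall fun p =>
    (key_point θ hθ A u hu p).symm)
end

section
/- Let θ : ℝ → ℝ be differentiable, A : ℝ³ → ℝ differentiable, and set Ã := A ∘ 𝔏, where 𝔏 is the twist map associated with θ. Then at every point (s,t₂,t₃) ∈ ℝ³: ∂_{t₂}( Ã·sin θ(s) ) − ∂_{t₃}( Ã·cos θ(s) ) = −(∂₃A) ∘ 𝔏, i.e. the two-dimensional magnetic field (in the variables t₂,t₃, at each fixed s) generated by the vector potential (Ã·cos θ(s), Ã·sin θ(s)) equals −∂₃A evaluated at 𝔏(s,t₂,t₃), where ∂₃A denotes the partial derivative of A with respect to its third coordinate. -/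
/-- with `Ã := A ∘ 𝔏`, at every point `(s,t₂,t₃)` the two-dimensional magnetic
field (in `(t₂,t₃)` at fixed `s`) of the vector potential `(Ã·cos θ(s), Ã·sin θ(s))`, i.e.
`∂_{t₂}(Ã·sin θ(s)) − ∂_{t₃}(Ã·cos θ(s))`, equals `−(∂₃A) ∘ 𝔏`. -/
theorem stmt_11 (θ : ℝ → ℝ) (hθ : Differentiable ℝ θ)
    (A : ℝ × ℝ × ℝ → ℝ) (hA : Differentiable ℝ A)
    (Atil : ℝ × ℝ × ℝ → ℝ) (hAtil : Atil = A ∘ twistMap θ) (p : ℝ × ℝ × ℝ) :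
    pd2 (fun q => Atil q * Real.sin (θ q.1)) p - pd3 (fun q => Atil q * Real.cos (θ q.1)) p
      = - pd3 A (twistMap θ p) := by
  obtain ⟨s, t₂, t₃⟩ := p
  subst hAtil
  set c := Real.cos (θ s) with hc
  set sn := Real.sin (θ s) with hsn
  have hq : twistMap θ (s, t₂, t₃) = (s, t₂ * c + t₃ * sn, t₃ * c - t₂ * sn) := rfl
  set L := fderiv ℝ A (twistMap θ (s, t₂, t₃)) with hL
  have hFA := (hA (twistMap θ (s, t₂, t₃))).hasFDerivAt
  -- derivative in t₂
  have hpath2 : HasDerivAt (fun x : ℝ => ((s, x * c + t₃ * sn, t₃ * c - x * sn) : ℝ × ℝ × ℝ))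
      ((0 : ℝ), c, -sn) t₂ := by
    apply HasDerivAt.prodMk (hasDerivAt_const t₂ s)
    apply HasDerivAt.prodMk
    · simpa using ((hasDerivAt_id t₂).mul_const c).add_const (t₃ * sn)
    · simpa using ((hasDerivAt_id t₂).mul_const sn).const_sub (t₃ * c)
  have h2 : HasDerivAt (fun x : ℝ => A (twistMap θ (s, x, t₃))) (L ((0 : ℝ), c, -sn)) t₂ := by
    have := hFA.comp_hasDerivAt t₂ hpath2
    simpa [twistMap, hq, hL, Function.comp_def] using this
  -- derivative in t₃
  have hpath3 : HasDerivAt (fun x : ℝ => ((s, t₂ * c + x * sn, x * c - t₂ * sn) : ℝ × ℝ × ℝ))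
      ((0 : ℝ), sn, c) t₃ := by
    apply HasDerivAt.prodMk (hasDerivAt_const t₃ s)
    apply HasDerivAt.prodMk
    · simpa using ((hasDerivAt_id t₃).mul_const sn).const_add (t₂ * c)
    · simpa using ((hasDerivAt_id t₃).mul_const c).sub_const (t₂ * sn)
  have h3 : HasDerivAt (fun x : ℝ => A (twistMap θ (s, t₂, x))) (L ((0 : ℝ), sn, c)) t₃ := by
    have := hFA.comp_hasDerivAt t₃ hpath3
    simpa [twistMap, hq, hL, Function.comp_def] using this
  -- pd3 of A at twistMap point
  have hpath4 : HasDerivAt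
      (fun x : ℝ => ((s, t₂ * c + t₃ * sn, x) : ℝ × ℝ × ℝ)) ((0 : ℝ), 0, 1) (t₃ * c - t₂ * sn) := by
    exact HasDerivAt.prodMk (hasDerivAt_const _ s) (HasDerivAt.prodMk (hasDerivAt_const _ _) (hasDerivAt_id _))
  have h4 : pd3 A (twistMap θ (s, t₂, t₃)) = L ((0 : ℝ), 0, 1) := by
    have := hFA.comp_hasDerivAt (t₃ * c - t₂ * sn) hpath4
    simp only [pd3, hq]
    exact this.deriv
  have e2 : pd2 (fun q => A (twistMap θ q) * Real.sin (θ q.1)) (s, t₂, t₃)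
      = L ((0 : ℝ), c, -sn) * sn := by
    simp only [pd2]
    exact (h2.mul_const sn).deriv
  have e3 : pd3 (fun q => A (twistMap θ q) * Real.cos (θ q.1)) (s, t₂, t₃)
      = L ((0 : ℝ), sn, c) * c := by
    simp only [pd3]
    exact (h3.mul_const c).deriv
  simp only [Function.comp] at e2 e3 ⊢
  rw [e2, e3, h4]
  have key : L ((0 : ℝ), c, -sn) * sn - L ((0 : ℝ), sn, c) * c = -L ((0 : ℝ), 0, 1) := by
    have hv1 : ((0 : ℝ), c, -sn) = c • ((0:ℝ), 1, 0) - sn • ((0:ℝ), 0, 1) := by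
      simp [Prod.ext_iff]
    have hv2 : ((0 : ℝ), sn, c) = sn • ((0:ℝ), 1, 0) + c • ((0:ℝ), 0, 1) := by
      simp [Prod.ext_iff]
    have pyth : sn ^ 2 + c ^ 2 = 1 := Real.sin_sq_add_cos_sq (θ s)
    rw [hv1, hv2, map_sub, map_add, map_smul, map_smul, map_smul, map_smul]
    set a := L ((0:ℝ), 1, 0); set b := L ((0:ℝ), 0, 1)
    simp only [smul_eq_mul]
    linear_combination (-b) * pyth
  exact key
end

section
/- Let s₀ > 0, let x₁ < x₂ be real numbers, let y₁, y₂ : ℝ → ℝ be continuous with y₁(t₂) ≤ y₂(t₂) and y₂(t₂) − y₁(t₂) ≤ η for all t₂ ∈ (x₁,x₂), where η > 0, and let S := {(t₂,t₃) ∈ ℝ² : x₁ < t₂ < x₂ and y₁(t₂) < t₃ < y₂(t₂)}. Let v : ℝ³ → ℂ be continuously differentiable and suppose v(s, t₂, y₂(t₂)) = 0 for all s ∈ (−s₀,s₀) and all t₂ ∈ (x₁,x₂). Then ∫_{(−s₀,s₀)×S} |v|² ds dt₂ dt₃ ≤ η²·∫_{(−s₀,s₀)×S} |∂_{t₃}v|²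 ds dt₂ dt₃. -/
open MeasureTheory

/-- Cauchy–Schwarz for a nonnegative continuous function against 1 on an interval. -/
lemma cs_aux {b c : ℝ} (hbc : b ≤ c) {f : ℝ → ℝ} (hf : Continuous f) (hf0 : ∀ x, 0 ≤ f x) :
    (∫ t in Set.Ioo b c, f t) ^ 2 ≤ (c - b) * ∫ t in Set.Ioo b c, f t ^ 2 := by
  set μ := (volume : Measure ℝ).restrict (Set.Ioo b c) with hμ
  haveI : IsFiniteMeasure μ := by
    constructor
    rw [hμ, Measure.restrict_apply MeasurableSet.univ, Set.univ_inter, Real.volume_Ioo]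
    exact ENNReal.ofReal_lt_top
  obtain ⟨C, hC⟩ : ∃ C, ∀ x ∈ Set.Icc b c, ‖f x‖ ≤ C :=
    isCompact_Icc.exists_bound_of_continuousOn hf.continuousOn
  have hfmem : MemLp f (ENNReal.ofReal 2) μ := by
    have htop : MemLp f ⊤ μ := by
      apply memLp_top_of_bound hf.aestronglyMeasurable C
      exact ae_restrict_of_forall_mem measurableSet_Ioo
        (fun x hx => hC x ⟨hx.1.le, hx.2.le⟩)
    exact htop.mono_exponent le_top
  have hgmem : MemLp (fun _ : ℝ => (1 : ℝ)) (ENNReal.ofReal 2) μ :=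
    (memLp_top_const 1).mono_exponent le_top
  have hpq : (2 : ℝ).HolderConjugate 2 := Real.HolderConjugate.two_two
  have h := integral_mul_le_Lp_mul_Lq_of_nonneg hpq
    (Filter.Eventually.of_forall hf0) (Filter.Eventually.of_forall (fun _ => zero_le_one))
    hfmem hgmem
  simp only [mul_one, Real.one_rpow] at h
  simp_rw [show (2:ℝ) = ((2:ℕ):ℝ) by norm_num, Real.rpow_natCast] at h
  have hA : 0 ≤ ∫ t, f t ^ 2 ∂μ := integral_nonneg (fun t => sq_nonneg _)
  have hB : (0:ℝ) ≤ c - b := sub_nonneg.2 hbc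
  have h1 : ∫ _a, (1:ℝ) ∂μ = c - b := by
    rw [integral_const, smul_eq_mul, mul_one, hμ, measureReal_restrict_apply_univ,
      Real.volume_real_Ioo_of_le hbc]
  rw [h1] at h
  have hsq : ∀ x : ℝ, 0 ≤ x → (x ^ (1/(2:ℝ)))^2 = x := by
    intro x hx
    rw [← Real.rpow_natCast (x ^ (1/(2:ℝ))) 2, ← Real.rpow_mul hx]
    norm_num
  have hf_nonneg_int : 0 ≤ ∫ t, f t ∂μ := integral_nonneg hf0
  calc (∫ t, f t ∂μ)^2 ≤ ((∫ a, f a ^ 2 ∂μ) ^ (1/(2:ℝ)) * (c-b) ^ (1/(2:ℝ)))^2 :=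
        pow_le_pow_left₀ hf_nonneg_int h 2
    _ = (∫ a, f a ^ 2 ∂μ) * (c-b) := by
        rw [mul_pow, hsq _ hA, hsq _ hB]
    _ = (c - b) * ∫ a, f a ^ 2 ∂μ := mul_comm _ _

/-- 1D Poincaré inequality on an interval with vanishing right endpoint value. -/
lemma oneD {η : ℝ} (hη : 0 < η) {b c : ℝ} (hbc : b ≤ c) (hwidth : c - b ≤ η)
    {w : ℝ → ℂ} (hw : ContDiff ℝ 1 w) (hwc : w c = 0) :
    ∫ t in Set.Ioo b c, ‖w t‖ ^ 2 ≤ η ^ 2 * ∫ t in Set.Ioo b c, ‖deriv w t‖ ^ 2 := by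
  have hD : Continuous (deriv w) := hw.continuous_deriv le_rfl
  set I := ∫ t in Set.Ioo b c, ‖deriv w t‖ ^ 2 with hI
  have hI0 : 0 ≤ I := setIntegral_nonneg measurableSet_Ioo (fun t _ => sq_nonneg _)
  have key : ∀ t ∈ Set.Icc b c, ‖w t‖ ^ 2 ≤ η * I := by
    intro t ht
    have hftc : ∫ u in t..c, deriv w u = w c - w t :=
      intervalIntegral.integral_deriv_eq_sub
        (fun x _ => (hw.differentiable one_ne_zero).differentiableAt)
        ((hD.intervalIntegrable _ _))
    have hwt : ‖w t‖ = ‖∫ u in t..c, deriv w u‖ := by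
      rw [hftc, hwc, zero_sub, norm_neg]
    have h1 : ‖w t‖ ≤ ∫ u in t..c, ‖deriv w u‖ := by
      rw [hwt]
      exact intervalIntegral.norm_integral_le_integral_norm ht.2
    have h2 : (∫ u in t..c, ‖deriv w u‖) ≤ ∫ u in b..c, ‖deriv w u‖ :=
      intervalIntegral.integral_mono_interval ht.1 ht.2 le_rfl
        (Filter.Eventually.of_forall (fun u => norm_nonneg _))
        (hD.norm.intervalIntegrable _ _)
    have h3 : (∫ u in b..c, ‖deriv w u‖) = ∫ u in Set.Ioo b c, ‖deriv w u‖ := by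
      rw [intervalIntegral.integral_of_le hbc, integral_Ioc_eq_integral_Ioo]
    have h4 : (∫ u in Set.Ioo b c, ‖deriv w u‖) ^ 2 ≤ (c - b) * I := by
      rw [hI]
      exact cs_aux hbc hD.norm (fun x => norm_nonneg _)
    have h5 : 0 ≤ ∫ u in Set.Ioo b c, ‖deriv w u‖ :=
      setIntegral_nonneg measurableSet_Ioo (fun u _ => norm_nonneg _)
    calc ‖w t‖ ^ 2 ≤ (∫ u in Set.Ioo b c, ‖deriv w u‖) ^ 2 := by
          apply pow_le_pow_left₀ (norm_nonneg _)
          rw [← h3]; exact h1.trans h2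
      _ ≤ (c - b) * I := h4
      _ ≤ η * I := mul_le_mul_of_nonneg_right hwidth hI0
  have hint : IntegrableOn (fun t => ‖w t‖ ^ 2) (Set.Ioo b c) := by
    apply (((hw.continuous.norm.pow 2).continuousOn).integrableOn_compact isCompact_Icc).mono_set
      Set.Ioo_subset_Icc_self
  calc ∫ t in Set.Ioo b c, ‖w t‖ ^ 2 ≤ ∫ _t in Set.Ioo b c, η * I := by
        apply setIntegral_mono_on hint (integrableOn_const (by
          rw [Real.volume_Ioo]; exact ENNReal.ofReal_ne_top)) measurableSet_Ioo
        exact fun t ht => key t ⟨ht.1.le, ht.2.le⟩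
    _ = (c - b) * (η * I) := by
        rw [setIntegral_const, smul_eq_mul, Real.volume_real_Ioo_of_le hbc]
    _ ≤ η * (η * I) := mul_le_mul_of_nonneg_right hwidth (by positivity)
    _ = η ^ 2 * I := by ring

lemma fubini_S {x₁ x₂ : ℝ} {y₁ y₂ : ℝ → ℝ} (hy₁ : Continuous y₁) (hy₂ : Continuous y₂)
    {S : Set (ℝ × ℝ)}
    (hS : S = {t : ℝ × ℝ | t.1 ∈ Set.Ioo x₁ x₂ ∧ t.2 ∈ Set.Ioo (y₁ t.1) (y₂ t.1)})
    {g : ℝ × ℝ → ℝ} (hg : IntegrableOn g S) :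
    ∫ p in S, g p = ∫ x in Set.Ioo x₁ x₂, ∫ y in Set.Ioo (y₁ x) (y₂ x), g (x, y) := by
  have hSm : MeasurableSet S := by
    rw [hS]
    exact measurableSet_regionBetween hy₁.measurable hy₂.measurable measurableSet_Ioo
  have hind : Integrable (S.indicator g) := (integrable_indicator_iff hSm).2 hg
  rw [← integral_indicator hSm]
  rw [MeasureTheory.Measure.volume_eq_prod] at hind ⊢
  rw [integral_prod _ hind]
  have hx : ∀ x : ℝ, (∫ y, S.indicator g (x, y)) =
      (Set.Ioo x₁ x₂).indicator (fun x' => ∫ y in Set.Ioo (y₁ x') (y₂ x'), g (x', y)) x := by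
    intro x
    by_cases hxm : x ∈ Set.Ioo x₁ x₂
    · rw [Set.indicator_of_mem hxm, ← integral_indicator measurableSet_Ioo]
      congr 1
      funext y
      by_cases hy : y ∈ Set.Ioo (y₁ x) (y₂ x)
      · rw [Set.indicator_of_mem hy, Set.indicator_of_mem (by rw [hS]; exact ⟨hxm, hy⟩)]
      · rw [Set.indicator_of_notMem hy,
          Set.indicator_of_notMem (by rw [hS]; exact fun h => hy h.2)]
    · rw [Set.indicator_of_notMem hxm]
      have hz : ∀ y, S.indicator g (x, y) = 0 := fun y =>
        Set.indicator_of_notMem (by rw [hS]; exact fun h => hxm h.1) _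
      simp [hz]
  simp_rw [hx]
  rw [integral_indicator measurableSet_Ioo]

lemma fubini_full {s₀ x₁ x₂ : ℝ} {y₁ y₂ : ℝ → ℝ} (hy₁ : Continuous y₁) (hy₂ : Continuous y₂)
    {S : Set (ℝ × ℝ)}
    (hS : S = {t : ℝ × ℝ | t.1 ∈ Set.Ioo x₁ x₂ ∧ t.2 ∈ Set.Ioo (y₁ t.1) (y₂ t.1)})
    {F : ℝ × ℝ × ℝ → ℝ} (hF : Continuous F) :
    ∫ p in Set.Ioo (-s₀) s₀ ×ˢ S, F p
      = ∫ s in Set.Ioo (-s₀) s₀, ∫ x in Set.Ioo x₁ x₂, ∫ y in Set.Ioo (y₁ x) (y₂ x),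
          F (s, x, y) := by
  obtain ⟨C₁, hC₁⟩ : ∃ C, ∀ x ∈ Set.Icc x₁ x₂, ‖y₁ x‖ ≤ C :=
    isCompact_Icc.exists_bound_of_continuousOn hy₁.continuousOn
  obtain ⟨C₂, hC₂⟩ : ∃ C, ∀ x ∈ Set.Icc x₁ x₂, ‖y₂ x‖ ≤ C :=
    isCompact_Icc.exists_bound_of_continuousOn hy₂.continuousOn
  have hSsub : S ⊆ Set.Icc x₁ x₂ ×ˢ Set.Icc (-C₁) C₂ := by
    rw [hS]
    rintro ⟨x, y⟩ ⟨hx, hy⟩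
    have hx' : x ∈ Set.Icc x₁ x₂ := ⟨hx.1.le, hx.2.le⟩
    refine ⟨hx', ?_, ?_⟩
    · have := hC₁ x hx'
      have h1 : -C₁ ≤ y₁ x := neg_le_of_abs_le (by rwa [Real.norm_eq_abs] at this)
      exact h1.trans hy.1.le
    · have := hC₂ x hx'
      have h2 : y₂ x ≤ C₂ := le_of_abs_le (by rwa [Real.norm_eq_abs] at this)
      exact hy.2.le.trans h2
  have hK : IsCompact (Set.Icc (-s₀) s₀ ×ˢ (Set.Icc x₁ x₂ ×ˢ Set.Icc (-C₁) C₂)) :=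
    isCompact_Icc.prod (isCompact_Icc.prod isCompact_Icc)
  have hFint : IntegrableOn F (Set.Ioo (-s₀) s₀ ×ˢ S) :=
    (hF.continuousOn.integrableOn_compact hK).mono_set
      (Set.prod_mono Set.Ioo_subset_Icc_self hSsub)
  have hFint2 : IntegrableOn F (Set.Ioo (-s₀) s₀ ×ˢ S) ((volume : Measure ℝ).prod volume) := by
    rwa [← MeasureTheory.Measure.volume_eq_prod]
  rw [MeasureTheory.Measure.volume_eq_prod, setIntegral_prod _ hFint2]
  apply setIntegral_congr_fun measurableSet_Ioo
  intro s _
  apply fubini_S hy₁ hy₂ hS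
  exact ((hF.comp (Continuous.prodMk_right s)).continuousOn.integrableOn_compact
    (isCompact_Icc.prod isCompact_Icc)).mono_set hSsub

lemma intOn {s₀ x₁ x₂ : ℝ} {y₁ y₂ : ℝ → ℝ} (hy₁ : Continuous y₁) (hy₂ : Continuous y₂)
    {S : Set (ℝ × ℝ)}
    (hS : S = {t : ℝ × ℝ | t.1 ∈ Set.Ioo x₁ x₂ ∧ t.2 ∈ Set.Ioo (y₁ t.1) (y₂ t.1)})
    {F : ℝ × ℝ × ℝ → ℝ} (hF : Continuous F) :
    IntegrableOn F (Set.Ioo (-s₀) s₀ ×ˢ S) := by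
  obtain ⟨C₁, hC₁⟩ : ∃ C, ∀ x ∈ Set.Icc x₁ x₂, ‖y₁ x‖ ≤ C :=
    isCompact_Icc.exists_bound_of_continuousOn hy₁.continuousOn
  obtain ⟨C₂, hC₂⟩ : ∃ C, ∀ x ∈ Set.Icc x₁ x₂, ‖y₂ x‖ ≤ C :=
    isCompact_Icc.exists_bound_of_continuousOn hy₂.continuousOn
  have hSsub : S ⊆ Set.Icc x₁ x₂ ×ˢ Set.Icc (-C₁) C₂ := by
    rw [hS]
    rintro ⟨x, y⟩ ⟨hx, hy⟩
    have hx' : x ∈ Set.Icc x₁ x₂ := ⟨hx.1.le, hx.2.le⟩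
    refine ⟨hx', ?_, ?_⟩
    · exact (neg_le_of_abs_le (by simpa [Real.norm_eq_abs] using hC₁ x hx')).trans hy.1.le
    · exact hy.2.le.trans (le_of_abs_le (by simpa [Real.norm_eq_abs] using hC₂ x hx'))
  have hK : IsCompact (Set.Icc (-s₀) s₀ ×ˢ (Set.Icc x₁ x₂ ×ˢ Set.Icc (-C₁) C₂)) :=
    isCompact_Icc.prod (isCompact_Icc.prod isCompact_Icc)
  exact (hF.continuousOn.integrableOn_compact hK).mono_set
    (Set.prod_mono Set.Ioo_subset_Icc_self hSsub)

/-- on the curvilinear strip `S = {(t₂,t₃) : x₁ < t₂ < x₂, y₁(t₂) < t₃ < y₂(t₂)}`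
of width at most `η`, if the C¹ function `v` vanishes on the upper boundary
`t₃ = y₂(t₂)` for all `s ∈ (−s₀,s₀)`, then
`∫_{(−s₀,s₀)×S} |v|² ≤ η²·∫_{(−s₀,s₀)×S} |∂_{t₃}v|²`. -/
theorem stmt_14 (s₀ : ℝ) (hs₀ : 0 < s₀) (x₁ x₂ : ℝ) (hx : x₁ < x₂)
    (y₁ y₂ : ℝ → ℝ) (hy₁ : Continuous y₁) (hy₂ : Continuous y₂)
    (η : ℝ) (hη : 0 < η)
    (hyle : ∀ t₂ ∈ Set.Ioo x₁ x₂, y₁ t₂ ≤ y₂ t₂)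
    (hywidth : ∀ t₂ ∈ Set.Ioo x₁ x₂, y₂ t₂ - y₁ t₂ ≤ η)
    (S : Set (ℝ × ℝ))
    (hS : S = {t : ℝ × ℝ | t.1 ∈ Set.Ioo x₁ x₂ ∧ t.2 ∈ Set.Ioo (y₁ t.1) (y₂ t.1)})
    (v : ℝ × ℝ × ℝ → ℂ) (hv : ContDiff ℝ 1 v)
    (hv0 : ∀ s ∈ Set.Ioo (-s₀) s₀, ∀ t₂ ∈ Set.Ioo x₁ x₂, v (s, t₂, y₂ t₂) = 0) :
    ∫ p in Set.Ioo (-s₀) s₀ ×ˢ S, ‖v p‖ ^ 2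
      ≤ η ^ 2 * ∫ p in Set.Ioo (-s₀) s₀ ×ˢ S, ‖pd3 v p‖ ^ 2 := by
  have hvd : Differentiable ℝ v := hv.differentiable one_ne_zero
  have hpd3 : pd3 v = fun p => (fderiv ℝ v p) (0, 0, 1) := by
    funext p
    have hL : HasDerivAt (fun x : ℝ => (p.1, p.2.1, x)) ((0 : ℝ), (0 : ℝ), (1 : ℝ)) p.2.2 :=
      (hasDerivAt_const _ _).prodMk ((hasDerivAt_const _ _).prodMk (hasDerivAt_id _))
    have hcomp : HasDerivAt (fun x => v (p.1, p.2.1, x))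
        ((fderiv ℝ v (p.1, p.2.1, p.2.2)) (0, 0, 1)) p.2.2 :=
      (hvd (p.1, p.2.1, p.2.2)).hasFDerivAt.comp_hasDerivAt p.2.2 hL
    exact hcomp.deriv
  have hpd3c : Continuous (pd3 v) := by
    rw [hpd3]
    exact (hv.continuous_fderiv one_ne_zero).clm_apply continuous_const
  have hF₁c : Continuous (fun p : ℝ × ℝ × ℝ => ‖v p‖ ^ 2) := hv.continuous.norm.pow 2
  have hF₂c : Continuous (fun p : ℝ × ℝ × ℝ => ‖pd3 v p‖ ^ 2) := hpd3c.norm.pow 2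
  have hGc : Continuous (fun p : ℝ × ℝ × ℝ => η ^ 2 * ‖pd3 v p‖ ^ 2 - ‖v p‖ ^ 2) :=
    (continuous_const.mul hF₂c).sub hF₁c
  have hint₁ : IntegrableOn (fun p : ℝ × ℝ × ℝ => ‖v p‖ ^ 2) (Set.Ioo (-s₀) s₀ ×ˢ S) :=
    intOn hy₁ hy₂ hS hF₁c
  have hint₂ : IntegrableOn (fun p : ℝ × ℝ × ℝ => ‖pd3 v p‖ ^ 2) (Set.Ioo (-s₀) s₀ ×ˢ S) :=
    intOn hy₁ hy₂ hS hF₂c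
  have key : 0 ≤ ∫ p in Set.Ioo (-s₀) s₀ ×ˢ S,
      (η ^ 2 * ‖pd3 v p‖ ^ 2 - ‖v p‖ ^ 2) := by
    rw [fubini_full hy₁ hy₂ hS hGc]
    apply setIntegral_nonneg measurableSet_Ioo
    intro s hs
    apply setIntegral_nonneg measurableSet_Ioo
    intro x hxm
    have hble : y₁ x ≤ y₂ x := hyle x hxm
    have hwed : y₂ x - y₁ x ≤ η := hywidth x hxm
    have hw : ContDiff ℝ 1 (fun y => v (s, x, y)) :=
      hv.comp (contDiff_const.prodMk (contDiff_const.prodMk contDiff_id))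
    have hone := oneD hη hble hwed hw (hv0 s hs x hxm)
    have e1 : IntegrableOn (fun y => ‖v (s, x, y)‖ ^ 2) (Set.Ioo (y₁ x) (y₂ x)) :=
      (((hv.continuous.comp (Continuous.prodMk_right s |>.comp
          (Continuous.prodMk_right x))).norm.pow 2).continuousOn.integrableOn_compact
        isCompact_Icc).mono_set Set.Ioo_subset_Icc_self
    have e2 : IntegrableOn (fun y => ‖pd3 v (s, x, y)‖ ^ 2) (Set.Ioo (y₁ x) (y₂ x)) :=
      (((hpd3c.comp (Continuous.prodMk_right s |>.comp
          (Continuous.prodMk_right x))).norm.pow 2).continuousOn.integrableOn_compact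
        isCompact_Icc).mono_set Set.Ioo_subset_Icc_self
    have hsplit : (∫ y in Set.Ioo (y₁ x) (y₂ x),
          (η ^ 2 * ‖pd3 v (s, x, y)‖ ^ 2 - ‖v (s, x, y)‖ ^ 2))
        = η ^ 2 * (∫ y in Set.Ioo (y₁ x) (y₂ x), ‖pd3 v (s, x, y)‖ ^ 2)
          - ∫ y in Set.Ioo (y₁ x) (y₂ x), ‖v (s, x, y)‖ ^ 2 := by
      rw [integral_sub (e2.const_mul _) e1, MeasureTheory.integral_const_mul]
    rw [hsplit, sub_nonneg]
    exact hone
  have hsplit₂ : (∫ p in Set.Ioo (-s₀) s₀ ×ˢ S, (η ^ 2 * ‖pd3 v p‖ ^ 2 - ‖v p‖ ^ 2))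
      = η ^ 2 * (∫ p in Set.Ioo (-s₀) s₀ ×ˢ S, ‖pd3 v p‖ ^ 2)
        - ∫ p in Set.Ioo (-s₀) s₀ ×ˢ S, ‖v p‖ ^ 2 := by
    rw [integral_sub (hint₂.const_mul _) hint₁, MeasureTheory.integral_const_mul]
  linarith
end

section
/- Let s₀ > 0, δ > 0, C' > 0, let ω ⊆ ℝ² be a bounded open set and ω_δ ⊆ ω a measurable subset, and let v : ℝ³ → ℂ be continuously differentiable. Suppose ω ∖ ω_δ is the union of finitely many pairwise disjoint measurable sets S₁, …, S_N, each of which is either (type 1) of the form {(t₂,t₃) : x₁ < t₂ < x₂, y₁(t₂) < t₃ < y₂(t₂)} for some reals x₁ < x₂ and continuous functions y₁ ≤ y₂ with y₂ − y₁ ≤ C'δ on (x₁,x₂), such that v(s,t₂,y₂(t₂)) = 0 for all s ∈ (−s₀,s₀) and t₂ ∈ (x₁,x₂), or (type 2) of the analogous form with the roles of t₂ and t₃ interchanged, i.e. {(t₂,t₃) : y₁ < t₃ < y₂, x₁(t₃) < t₂ < x₂(t₃)} with continuous x₁ ≤ x₂, x₂ − x₁ ≤ C'δ, and v(s,x₂(t₃),t₃)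 = 0 for all s ∈ (−s₀,s₀) and t₃ ∈ (y₁,y₂). If moreover ∫_{(−s₀,s₀)×ω_δ} |v|² ds dt < (1/2)·∫_{(−s₀,s₀)×ω} |v|² ds dt, then ∫_{(−s₀,s₀)×ω} ( |∂_{t₂}v|² + |∂_{t₃}v|² ) ds dt ≥ (1/(2 C'² δ²))·∫_{(−s₀,s₀)×ω} |v|² ds dt. -/
open MeasureTheory

open Set Filter

-- Cauchy–Schwarz
lemma cs1d {a b : ℝ} (hab : a ≤ b) {g : ℝ → ℝ} (hgc : Continuous g) (hg0 : ∀ x, 0 ≤ g x) :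
    (∫ x in Set.Ioo a b, g x) ^ 2 ≤ (b - a) * ∫ x in Set.Ioo a b, g x ^ 2 := by
  have hpq : Real.HolderConjugate 2 2 := Real.HolderConjugate.two_two
  set μ := (volume : Measure ℝ).restrict (Set.Ioo a b) with hμ
  have hfin : IsFiniteMeasure μ := by
    constructor
    rw [hμ, Measure.restrict_apply_univ, Real.volume_Ioo]
    exact ENNReal.ofReal_lt_top
  obtain ⟨C, hC⟩ := (isCompact_Icc (a := a) (b := b)).exists_bound_of_continuousOn hgc.continuousOn
  have hmem : MemLp g (ENNReal.ofReal 2) μ := by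
    refine MemLp.of_bound hgc.aestronglyMeasurable.restrict C ?_
    exact (ae_restrict_iff' measurableSet_Ioo).2 (Eventually.of_forall fun x hx =>
      hC x (Ioo_subset_Icc_self hx))
  have hone : MemLp (fun _ : ℝ => (1:ℝ)) (ENNReal.ofReal 2) μ := memLp_const 1
  have h := integral_mul_le_Lp_mul_Lq_of_nonneg hpq (μ := μ)
    (Eventually.of_forall hg0) (Eventually.of_forall fun _ => zero_le_one) hmem hone
  simp only [mul_one] at h
  simp only [Real.rpow_two, sq] at h
  have hconst : ∫ _ : ℝ, (1:ℝ) * 1 ∂μ = b - a := by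
    simp [hμ, Real.volume_Ioo, ENNReal.toReal_ofReal (sub_nonneg.2 hab), hab]
  rw [hconst] at h
  set A := ∫ x, g x ∂μ with hA
  set B := ∫ x, g x * g x ∂μ with hB
  have hA0 : 0 ≤ A := integral_nonneg hg0
  have hB0 : 0 ≤ B := integral_nonneg fun x => mul_nonneg (hg0 x) (hg0 x)
  have key : A ^ 2 ≤ B * (b - a) := by
    calc A ^ 2 ≤ (B ^ ((1:ℝ)/2) * (b - a) ^ ((1:ℝ)/2)) ^ 2 := by
          apply pow_le_pow_left₀ hA0
          convert h using 2 <;> norm_num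
      _ = (B ^ ((1:ℝ)/2)) ^ 2 * ((b - a) ^ ((1:ℝ)/2)) ^ 2 := mul_pow _ _ _
      _ = B * (b - a) := by
          rw [← Real.rpow_natCast (B ^ ((1:ℝ)/2)) 2, ← Real.rpow_mul hB0,
            ← Real.rpow_natCast ((b-a) ^ ((1:ℝ)/2)) 2, ← Real.rpow_mul (sub_nonneg.2 hab)]
          norm_num
  have hBeq : ∫ x in Set.Ioo a b, g x ^ 2 = B := by
    rw [hB, hμ]; exact integral_congr_ae (Eventually.of_forall fun x => sq (g x))
  rw [hBeq]
  calc (∫ x in Set.Ioo a b, g x) ^ 2 = A ^ 2 := by rw [hA, hμ]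
    _ ≤ B * (b - a) := key
    _ = (b - a) * B := mul_comm _ _

lemma poincare1d {f f' : ℝ → ℂ} (hd : ∀ x, HasDerivAt f (f' x) x) (hc : Continuous f')
    {a b L : ℝ} (hab : a ≤ b) (hbL : b - a ≤ L) (hfb : f b = 0) :
    ∫ x in Set.Ioo a b, ‖f x‖ ^ 2 ≤ L ^ 2 * ∫ x in Set.Ioo a b, ‖f' x‖ ^ 2 := by
  set M : ℝ := ∫ y in Set.Ioo a b, ‖f' y‖ with hM
  have hM0 : 0 ≤ M := integral_nonneg fun y => norm_nonneg _
  have hIab : ∫ y in a..b, ‖f' y‖ = M := by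
    rw [intervalIntegral.integral_of_le hab, integral_Ioc_eq_integral_Ioo]
  have key : ∀ x ∈ Set.Icc a b, ‖f x‖ ≤ M := by
    intro x hx
    have hftc : ∫ y in x..b, f' y = f b - f x :=
      intervalIntegral.integral_eq_sub_of_hasDerivAt (fun y _ => hd y)
        (hc.intervalIntegrable x b)
    have : ‖f x‖ = ‖∫ y in x..b, f' y‖ := by rw [hftc, hfb, zero_sub, norm_neg]
    rw [this]
    calc ‖∫ y in x..b, f' y‖ ≤ ∫ y in x..b, ‖f' y‖ :=
          intervalIntegral.norm_integral_le_integral_norm hx.2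
      _ ≤ ∫ y in a..b, ‖f' y‖ := by
          apply intervalIntegral.integral_mono_interval hx.1 hx.2 le_rfl
            (Eventually.of_forall fun y => norm_nonneg _) (hc.norm.intervalIntegrable a b)
      _ = M := hIab
  have hcs : M ^ 2 ≤ (b - a) * ∫ x in Set.Ioo a b, ‖f' x‖ ^ 2 := cs1d hab hc.norm (fun _ => norm_nonneg _)
  have hbound : ∫ x in Set.Ioo a b, ‖f x‖ ^ 2 ≤ M ^ 2 * (b - a) := by
    have h1 : ‖∫ x in Set.Ioo a b, ‖f x‖ ^ 2‖ ≤ M ^ 2 * (volume (Set.Ioo a b)).toReal := by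
      have hfcont : Continuous f :=
        Differentiable.continuous (fun x => (hd x).differentiableAt)
      apply norm_setIntegral_le_of_norm_le_const_ae'
        (by rw [Real.volume_Ioo]; exact ENNReal.ofReal_lt_top)
      refine Eventually.of_forall fun x hx => ?_
      rw [Real.norm_eq_abs, abs_of_nonneg (by positivity)]
      exact pow_le_pow_left₀ (norm_nonneg _) (key x (Set.Ioo_subset_Icc_self hx)) 2
    rw [Real.volume_Ioo, ENNReal.toReal_ofReal (sub_nonneg.2 hab)] at h1
    exact (Real.le_norm_self _).trans h1
  have hL0 : 0 ≤ b - a := sub_nonneg.2 hab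
  have hI0 : 0 ≤ ∫ x in Set.Ioo a b, ‖f' x‖ ^ 2 := integral_nonneg fun x => sq_nonneg _
  have h2 : (b - a) ^ 2 * (∫ x in Set.Ioo a b, ‖f' x‖ ^ 2) ≤ L ^ 2 * ∫ x in Set.Ioo a b, ‖f' x‖ ^ 2 :=
    mul_le_mul_of_nonneg_right (pow_le_pow_left₀ hL0 hbL 2) hI0
  nlinarith [mul_le_mul_of_nonneg_right hcs hL0]


lemma slice3_hasDerivAt {v : ℝ × ℝ × ℝ → ℂ} (hv : ContDiff ℝ 1 v) (s t₂ : ℝ) (x : ℝ) :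
    HasDerivAt (fun y => v (s, t₂, y)) (pd3 v (s, t₂, x)) x := by
  have hc : HasDerivAt (fun y : ℝ => ((s, t₂, y) : ℝ × ℝ × ℝ)) (0, 0, 1) x :=
    (hasDerivAt_const x s).prodMk ((hasDerivAt_const x t₂).prodMk (hasDerivAt_id x))
  have h := ((hv.differentiable one_ne_zero) (s, t₂, x)).hasFDerivAt.comp_hasDerivAt x hc
  have : pd3 v (s, t₂, x) = fderiv ℝ v (s, t₂, x) (0, 0, 1) := by
    rw [pd3]; exact h.deriv
  rw [this]; exact h

lemma pd3_eq_fderiv {v : ℝ × ℝ × ℝ → ℂ} (hv : ContDiff ℝ 1 v) :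
    pd3 v = fun p => fderiv ℝ v p (0, 0, 1) := by
  funext p
  have := (slice3_hasDerivAt hv p.1 p.2.1 p.2.2).deriv
  have hc : HasDerivAt (fun y : ℝ => ((p.1, p.2.1, y) : ℝ × ℝ × ℝ)) (0, 0, 1) p.2.2 :=
    (hasDerivAt_const _ p.1).prodMk ((hasDerivAt_const _ p.2.1).prodMk (hasDerivAt_id _))
  have h := ((hv.differentiable one_ne_zero) (p.1, p.2.1, p.2.2)).hasFDerivAt.comp_hasDerivAt p.2.2 hc
  rw [pd3]
  exact h.deriv

lemma pd3_continuous {v : ℝ × ℝ × ℝ → ℂ} (hv : ContDiff ℝ 1 v) : Continuous (pd3 v) := by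
  rw [pd3_eq_fderiv hv]
  exact (ContinuousLinearMap.apply ℝ ℂ ((0:ℝ), (0:ℝ), (1:ℝ))).continuous.comp
    (hv.continuous_fderiv one_ne_zero)

lemma pd2_eq_fderiv {v : ℝ × ℝ × ℝ → ℂ} (hv : ContDiff ℝ 1 v) :
    pd2 v = fun p => fderiv ℝ v p (0, 1, 0) := by
  funext p
  have h := ((hv.differentiable one_ne_zero) (p.1, p.2.1, p.2.2)).hasFDerivAt.comp_hasDerivAt p.2.1
    (((hasDerivAt_const _ p.1).prodMk ((hasDerivAt_id _).prodMk (hasDerivAt_const _ p.2.2)) :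
      HasDerivAt (fun y : ℝ => ((p.1, y, p.2.2) : ℝ × ℝ × ℝ)) (0, 1, 0) p.2.1))
  rw [pd2]
  exact h.deriv

lemma pd2_continuous {v : ℝ × ℝ × ℝ → ℂ} (hv : ContDiff ℝ 1 v) : Continuous (pd2 v) := by
  rw [pd2_eq_fderiv hv]
  exact (ContinuousLinearMap.apply ℝ ℂ ((0:ℝ), (1:ℝ), (0:ℝ))).continuous.comp
    (hv.continuous_fderiv one_ne_zero)

lemma region_repr {x₁ x₂ : ℝ} {y₁ y₂ : ℝ → ℝ} {T : Set (ℝ × ℝ)}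
    (hTm : MeasurableSet T)
    (hTdef : T = {t : ℝ × ℝ | t.1 ∈ Set.Ioo x₁ x₂ ∧ t.2 ∈ Set.Ioo (y₁ t.1) (y₂ t.1)})
    {g : ℝ × ℝ → ℝ} (hg : IntegrableOn g T) :
    (∫ t in T, g t) = (∫ x in Set.Ioo x₁ x₂, ∫ y in Set.Ioo (y₁ x) (y₂ x), g (x, y)) ∧
    IntegrableOn (fun x => ∫ y in Set.Ioo (y₁ x) (y₂ x), g (x, y)) (Set.Ioo x₁ x₂) := by
  have hind : Integrable (T.indicator g) ((volume : Measure ℝ).prod (volume : Measure ℝ)) := by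
    rw [← Measure.volume_eq_prod]
    exact (integrable_indicator_iff hTm).2 hg
  have key : ∀ x : ℝ, (∫ y, T.indicator g (x, y)) =
      (Set.Ioo x₁ x₂).indicator (fun x => ∫ y in Set.Ioo (y₁ x) (y₂ x), g (x, y)) x := by
    intro x
    by_cases hx : x ∈ Set.Ioo x₁ x₂
    · have heq : (fun y => T.indicator g (x, y)) =
          (Set.Ioo (y₁ x) (y₂ x)).indicator (fun y => g (x, y)) := by
        funext y
        by_cases hy : y ∈ Set.Ioo (y₁ x) (y₂ x)
        · rw [Set.indicator_of_mem hy, Set.indicator_of_mem (by rw [hTdef]; exact ⟨hx, hy⟩)]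
        · rw [Set.indicator_of_notMem hy, Set.indicator_of_notMem
            (by rw [hTdef]; exact fun h => hy h.2)]
      rw [heq, integral_indicator measurableSet_Ioo, Set.indicator_of_mem hx]
    · have heq : (fun y => T.indicator g (x, y)) = fun _ => 0 := by
        funext y
        exact Set.indicator_of_notMem (by rw [hTdef]; exact fun h => hx h.1) _
      rw [heq, integral_zero, Set.indicator_of_notMem hx]
  constructor
  · rw [← integral_indicator hTm, Measure.volume_eq_prod, integral_prod _ hind]
    simp_rw [key]
    rw [integral_indicator measurableSet_Ioo]
  · have h2 := hind.integral_prod_left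
    have heq : (fun x => ∫ y, T.indicator g (x, y)) =
        (Set.Ioo x₁ x₂).indicator (fun x => ∫ y in Set.Ioo (y₁ x) (y₂ x), g (x, y)) :=
      funext key
    rw [heq] at h2
    exact (integrable_indicator_iff measurableSet_Ioo).1 h2

lemma integrableOn_of_bounded2 {X : Type*} [MeasureSpace X] [MetricSpace X]
    [ProperSpace X] [OpensMeasurableSpace X] [IsFiniteMeasureOnCompacts (volume : Measure X)]
    {f : X → ℝ} (hf : Continuous f) {A : Set X} (hA : Bornology.IsBounded A) :
    IntegrableOn f A :=
  (hf.continuousOn.integrableOn_compact hA.isCompact_closure).mono_set subset_closure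

lemma strip1 {v : ℝ × ℝ × ℝ → ℂ} (hv : ContDiff ℝ 1 v) {s₀ L : ℝ}
    {x₁ x₂ : ℝ} {y₁ y₂ : ℝ → ℝ}
    (hwidth : ∀ t₂ ∈ Set.Ioo x₁ x₂, y₁ t₂ ≤ y₂ t₂ ∧ y₂ t₂ - y₁ t₂ ≤ L)
    {T : Set (ℝ × ℝ)} (hTm : MeasurableSet T) (hTb : Bornology.IsBounded T)
    (hTdef : T = {t : ℝ × ℝ | t.1 ∈ Set.Ioo x₁ x₂ ∧ t.2 ∈ Set.Ioo (y₁ t.1) (y₂ t.1)})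
    (hzero : ∀ s ∈ Set.Ioo (-s₀) s₀, ∀ t₂ ∈ Set.Ioo x₁ x₂, v (s, t₂, y₂ t₂) = 0) :
    ∫ p in Set.Ioo (-s₀) s₀ ×ˢ T, ‖v p‖ ^ 2
      ≤ L ^ 2 * ∫ p in Set.Ioo (-s₀) s₀ ×ˢ T, ‖pd3 v p‖ ^ 2 := by
  classical
  set Q : Set ℝ := Set.Ioo (-s₀) s₀ with hQ
  have hQb : Bornology.IsBounded Q := Metric.isBounded_Ioo _ _
  have hPb : Bornology.IsBounded (Q ×ˢ T) := hQb.prod hTb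
  have hc1 : Continuous fun p : ℝ × ℝ × ℝ => ‖v p‖ ^ 2 := (hv.continuous.norm).pow 2
  have hc2 : Continuous fun p : ℝ × ℝ × ℝ => ‖pd3 v p‖ ^ 2 := ((pd3_continuous hv).norm).pow 2
  have hInt1 : IntegrableOn (fun p : ℝ × ℝ × ℝ => ‖v p‖ ^ 2) (Q ×ˢ T) :=
    integrableOn_of_bounded2 hc1 hPb
  have hInt2 : IntegrableOn (fun p : ℝ × ℝ × ℝ => ‖pd3 v p‖ ^ 2) (Q ×ˢ T) :=
    integrableOn_of_bounded2 hc2 hPb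
  -- slice integrability
  have hsliceInt : ∀ (f : ℝ × ℝ × ℝ → ℝ), Continuous f → ∀ s : ℝ,
      IntegrableOn (fun t : ℝ × ℝ => f (s, t)) T := by
    intro f hf s
    exact integrableOn_of_bounded2 (hf.comp (by fun_prop)) hTb
  -- inner 2D inequality for each s ∈ Q
  have inner2d : ∀ s ∈ Q, (∫ t in T, ‖v (s, t)‖ ^ 2)
      ≤ L ^ 2 * ∫ t in T, ‖pd3 v (s, t)‖ ^ 2 := by
    intro s hs
    obtain ⟨e1, i1⟩ := region_repr hTm hTdef (hsliceInt _ hc1 s)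
    obtain ⟨e2, i2⟩ := region_repr hTm hTdef (hsliceInt _ hc2 s)
    rw [e1, e2, ← integral_const_mul]
    apply setIntegral_mono_on i1 (i2.const_mul (L ^ 2)) measurableSet_Ioo
    intro x hx
    exact poincare1d (f' := fun y => pd3 v (s, x, y))
      (fun y => slice3_hasDerivAt hv s x y)
      ((pd3_continuous hv).comp (by fun_prop))
      (hwidth x hx).1 (hwidth x hx).2 (hzero s hs x hx)
  -- Fubini
  have hInt1' : Integrable (fun p : ℝ × ℝ × ℝ => ‖v p‖ ^ 2)
      (((volume : Measure ℝ).restrict Q).prod ((volume : Measure (ℝ × ℝ)).restrict T)) := by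
    rw [Measure.prod_restrict, ← Measure.volume_eq_prod]; exact hInt1
  have hInt2' : Integrable (fun p : ℝ × ℝ × ℝ => ‖pd3 v p‖ ^ 2)
      (((volume : Measure ℝ).restrict Q).prod ((volume : Measure (ℝ × ℝ)).restrict T)) := by
    rw [Measure.prod_restrict, ← Measure.volume_eq_prod]; exact hInt2
  have e1 : ∫ p in Q ×ˢ T, ‖v p‖ ^ 2 = ∫ s in Q, ∫ t in T, ‖v (s, t)‖ ^ 2 := by
    rw [Measure.volume_eq_prod]
    exact setIntegral_prod _ (by rw [← Measure.volume_eq_prod]; exact hInt1)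
  have e2 : ∫ p in Q ×ˢ T, ‖pd3 v p‖ ^ 2 = ∫ s in Q, ∫ t in T, ‖pd3 v (s, t)‖ ^ 2 := by
    rw [Measure.volume_eq_prod]
    exact setIntegral_prod _ (by rw [← Measure.volume_eq_prod]; exact hInt2)
  rw [e1, e2, ← integral_const_mul]
  exact setIntegral_mono_on hInt1'.integral_prod_left
    (hInt2'.integral_prod_left.const_mul (L ^ 2)) measurableSet_Ioo
    (fun s hs => inner2d s hs)
lemma strip2 {v : ℝ × ℝ × ℝ → ℂ} (hv : ContDiff ℝ 1 v) {s₀ L : ℝ}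
    {y₁ y₂ : ℝ} {x₁ x₂ : ℝ → ℝ}
    (hwidth : ∀ t₃ ∈ Set.Ioo y₁ y₂, x₁ t₃ ≤ x₂ t₃ ∧ x₂ t₃ - x₁ t₃ ≤ L)
    {T : Set (ℝ × ℝ)} (hTm : MeasurableSet T) (hTb : Bornology.IsBounded T)
    (hTdef : T = {t : ℝ × ℝ | t.2 ∈ Set.Ioo y₁ y₂ ∧ t.1 ∈ Set.Ioo (x₁ t.2) (x₂ t.2)})
    (hzero : ∀ s ∈ Set.Ioo (-s₀) s₀, ∀ t₃ ∈ Set.Ioo y₁ y₂, v (s, x₂ t₃, t₃) = 0) :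
    ∫ p in Set.Ioo (-s₀) s₀ ×ˢ T, ‖v p‖ ^ 2
      ≤ L ^ 2 * ∫ p in Set.Ioo (-s₀) s₀ ×ˢ T, ‖pd2 v p‖ ^ 2 := by
  classical
  set Q : Set ℝ := Set.Ioo (-s₀) s₀ with hQ
  set m : ℝ × ℝ × ℝ → ℝ × ℝ × ℝ := fun p => (p.1, p.2.2, p.2.1) with hm
  set w : ℝ × ℝ × ℝ → ℂ := fun p => v (m p) with hw
  have hwC : ContDiff ℝ 1 w := hv.comp
    (contDiff_fst.prodMk ((contDiff_snd.comp contDiff_snd).prodMk (contDiff_fst.comp contDiff_snd)))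
  set T' : Set (ℝ × ℝ) := Prod.swap ⁻¹' T with hT'
  have hT'm : MeasurableSet T' := measurable_swap hTm
  have hb1 : Bornology.IsBounded (Prod.snd '' T) :=
    ((hTb.isCompact_closure.image continuous_snd).isBounded).subset
      (Set.image_mono subset_closure)
  have hb2 : Bornology.IsBounded (Prod.fst '' T) :=
    ((hTb.isCompact_closure.image continuous_fst).isBounded).subset
      (Set.image_mono subset_closure)
  have hT'b : Bornology.IsBounded T' := by
    refine (hb1.prod hb2).subset fun t ht => ?_
    exact ⟨⟨Prod.swap t, ht, rfl⟩, ⟨Prod.swap t, ht, rfl⟩⟩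
  have hT'def : T' = {t : ℝ × ℝ | t.1 ∈ Set.Ioo y₁ y₂ ∧ t.2 ∈ Set.Ioo (x₁ t.1) (x₂ t.1)} := by
    ext t; rw [hT', Set.mem_preimage, hTdef]; rfl
  have hzero' : ∀ s ∈ Set.Ioo (-s₀) s₀, ∀ a ∈ Set.Ioo y₁ y₂, w (s, a, x₂ a) = 0 :=
    fun s hs a ha => hzero s hs a ha
  have h := strip1 hwC (fun a ha => hwidth a ha) hT'm hT'b hT'def hzero'
  -- measure-preserving change of variables
  have e : MeasurableEquiv (ℝ × ℝ × ℝ) (ℝ × ℝ × ℝ) :=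
    (MeasurableEquiv.refl ℝ).prodCongr (MeasurableEquiv.prodComm (α := ℝ) (β := ℝ))
  have hmp : MeasureTheory.MeasurePreserving m (volume : Measure (ℝ × ℝ × ℝ)) volume := by
    have h1 : MeasureTheory.MeasurePreserving (Prod.map (id : ℝ → ℝ) (Prod.swap : ℝ × ℝ → ℝ × ℝ))
        ((volume : Measure ℝ).prod ((volume : Measure ℝ).prod volume))
        ((volume : Measure ℝ).prod ((volume : Measure ℝ).prod volume)) :=
      (MeasureTheory.MeasurePreserving.id _).prod
        (by
          have := Measure.measurePreserving_swap
            (μ := (volume : Measure ℝ)) (ν := (volume : Measure ℝ))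
          rwa [← Measure.volume_eq_prod] at this ⊢)
    have h2 := h1
    rw [← Measure.volume_eq_prod] at h2
    rw [← Measure.volume_eq_prod] at h2
    exact h2
  have hemb : MeasurableEmbedding m :=
    ((MeasurableEquiv.refl ℝ).prodCongr (MeasurableEquiv.prodComm (α := ℝ) (β := ℝ))).measurableEmbedding
  have hpre : m ⁻¹' (Q ×ˢ T) = Q ×ˢ T' := rfl
  have c1 : ∫ p in Q ×ˢ T', ‖w p‖ ^ 2 = ∫ p in Q ×ˢ T, ‖v p‖ ^ 2 := by
    rw [← hpre]
    exact hmp.setIntegral_preimage_emb hemb (fun q => ‖v q‖ ^ 2) _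
  have hpdeq : (fun p => ‖pd3 w p‖ ^ 2) = fun p => ‖pd2 v (m p)‖ ^ 2 := rfl
  have c2 : ∫ p in Q ×ˢ T', ‖pd3 w p‖ ^ 2 = ∫ p in Q ×ˢ T, ‖pd2 v p‖ ^ 2 := by
    rw [hpdeq, ← hpre]
    exact hmp.setIntegral_preimage_emb hemb (fun q => ‖pd2 v q‖ ^ 2) _
  rw [← c1, ← c2]
  exact h

/-- A set of "type 1": a curvilinear strip `{(t₂,t₃) : x₁ < t₂ < x₂, y₁(t₂) < t₃ < y₂(t₂)}`
of width at most `C'·δ`, on whose upper boundary `t₃ = y₂(t₂)` the function `v` vanishes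
for all `s ∈ (−s₀,s₀)`. -/
def IsType1Strip (s₀ δ C' : ℝ) (v : ℝ × ℝ × ℝ → ℂ) (T : Set (ℝ × ℝ)) : Prop :=
  ∃ (x₁ x₂ : ℝ) (y₁ y₂ : ℝ → ℝ), x₁ < x₂ ∧ Continuous y₁ ∧ Continuous y₂ ∧
    (∀ t₂ ∈ Set.Ioo x₁ x₂, y₁ t₂ ≤ y₂ t₂ ∧ y₂ t₂ - y₁ t₂ ≤ C' * δ) ∧
    T = {t : ℝ × ℝ | t.1 ∈ Set.Ioo x₁ x₂ ∧ t.2 ∈ Set.Ioo (y₁ t.1) (y₂ t.1)} ∧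
    (∀ s ∈ Set.Ioo (-s₀) s₀, ∀ t₂ ∈ Set.Ioo x₁ x₂, v (s, t₂, y₂ t₂) = 0)

/-- A set of "type 2": the analogue of type 1 with the roles of `t₂` and `t₃` interchanged. -/
def IsType2Strip (s₀ δ C' : ℝ) (v : ℝ × ℝ × ℝ → ℂ) (T : Set (ℝ × ℝ)) : Prop :=
  ∃ (y₁ y₂ : ℝ) (x₁ x₂ : ℝ → ℝ), y₁ < y₂ ∧ Continuous x₁ ∧ Continuous x₂ ∧
    (∀ t₃ ∈ Set.Ioo y₁ y₂, x₁ t₃ ≤ x₂ t₃ ∧ x₂ t₃ - x₁ t₃ ≤ C' * δ) ∧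
    T = {t : ℝ × ℝ | t.2 ∈ Set.Ioo y₁ y₂ ∧ t.1 ∈ Set.Ioo (x₁ t.2) (x₂ t.2)} ∧
    (∀ s ∈ Set.Ioo (-s₀) s₀, ∀ t₃ ∈ Set.Ioo y₁ y₂, v (s, x₂ t₃, t₃) = 0)

/-- if `ω ∖ ω_δ` is a finite pairwise disjoint union of strips of width
at most `C'·δ` (of type 1 or type 2, with `v` vanishing on the appropriate boundary) and
`∫_{(−s₀,s₀)×ω_δ} |v|² < (1/2)·∫_{(−s₀,s₀)×ω} |v|²`, then
`∫_{(−s₀,s₀)×ω} (|∂_{t₂}v|² + |∂_{t₃}v|²) ≥ (1/(2C'²δ²))·∫_{(−s₀,s₀)×ω} |v|²`. -/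
theorem stmt_15 (s₀ δ C' : ℝ) (hs₀ : 0 < s₀) (hδ : 0 < δ) (hC' : 0 < C')
    (ω : Set (ℝ × ℝ)) (hωo : IsOpen ω) (hωb : Bornology.IsBounded ω)
    (ωδ : Set (ℝ × ℝ)) (hωδ : ωδ ⊆ ω) (hωδm : MeasurableSet ωδ)
    (v : ℝ × ℝ × ℝ → ℂ) (hv : ContDiff ℝ 1 v)
    (N : ℕ) (S : Fin N → Set (ℝ × ℝ))
    (hSm : ∀ i, MeasurableSet (S i))
    (hSdisj : Pairwise (Function.onFun Disjoint S))
    (hScover : ω \ ωδ = ⋃ i, S i)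
    (hStype : ∀ i, IsType1Strip s₀ δ C' v (S i) ∨ IsType2Strip s₀ δ C' v (S i))
    (hsmall : ∫ p in Set.Ioo (-s₀) s₀ ×ˢ ωδ, ‖v p‖ ^ 2
        < (1 / 2) * ∫ p in Set.Ioo (-s₀) s₀ ×ˢ ω, ‖v p‖ ^ 2) :
    ∫ p in Set.Ioo (-s₀) s₀ ×ˢ ω, (‖pd2 v p‖ ^ 2 + ‖pd3 v p‖ ^ 2)
      ≥ (1 / (2 * C' ^ 2 * δ ^ 2)) * ∫ p in Set.Ioo (-s₀) s₀ ×ˢ ω, ‖v p‖ ^ 2 := by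
  classical
  set Q : Set ℝ := Set.Ioo (-s₀) s₀ with hQdef
  set L : ℝ := C' * δ with hLdef
  have hL0 : 0 < L := mul_pos hC' hδ
  have hQm : MeasurableSet Q := measurableSet_Ioo
  have hQb : Bornology.IsBounded Q := Metric.isBounded_Ioo _ _
  have hωm : MeasurableSet ω := hωo.measurableSet
  have hc1 : Continuous fun p : ℝ × ℝ × ℝ => ‖v p‖ ^ 2 := (hv.continuous.norm).pow 2
  have hcG : Continuous fun p : ℝ × ℝ × ℝ => ‖pd2 v p‖ ^ 2 + ‖pd3 v p‖ ^ 2 :=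
    (((pd2_continuous hv).norm).pow 2).add (((pd3_continuous hv).norm).pow 2)
  have hG0 : ∀ p : ℝ × ℝ × ℝ, 0 ≤ ‖pd2 v p‖ ^ 2 + ‖pd3 v p‖ ^ 2 :=
    fun p => add_nonneg (sq_nonneg _) (sq_nonneg _)
  have hSsub : ∀ i, S i ⊆ ω := by
    intro i
    have : S i ⊆ ω \ ωδ := by rw [hScover]; exact Set.subset_iUnion S i
    exact this.trans Set.diff_subset
  have hSb : ∀ i, Bornology.IsBounded (S i) := fun i => hωb.subset (hSsub i)
  have hIv : IntegrableOn (fun p : ℝ × ℝ × ℝ => ‖v p‖ ^ 2) (Q ×ˢ ω) :=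
    integrableOn_of_bounded2 hc1 (hQb.prod hωb)
  have hIG : IntegrableOn (fun p : ℝ × ℝ × ℝ => ‖pd2 v p‖ ^ 2 + ‖pd3 v p‖ ^ 2) (Q ×ˢ ω) :=
    integrableOn_of_bounded2 hcG (hQb.prod hωb)
  have key : ∀ i, ∫ p in Q ×ˢ S i, ‖v p‖ ^ 2
      ≤ L ^ 2 * ∫ p in Q ×ˢ S i, (‖pd2 v p‖ ^ 2 + ‖pd3 v p‖ ^ 2) := by
    intro i
    have hPb : Bornology.IsBounded (Q ×ˢ S i) := hQb.prod (hSb i)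
    have hIG' : IntegrableOn (fun p : ℝ × ℝ × ℝ => ‖pd2 v p‖ ^ 2 + ‖pd3 v p‖ ^ 2) (Q ×ˢ S i) :=
      hIG.mono_set (Set.prod_mono_right (hSsub i))
    rcases hStype i with h1 | h2
    · obtain ⟨x₁, x₂, y₁, y₂, _, _, _, hwidth, hTdef, hzero⟩ := h1
      refine (strip1 hv hwidth (hSm i) (hSb i) hTdef hzero).trans
        (mul_le_mul_of_nonneg_left ?_ (sq_nonneg L))
      refine setIntegral_mono_on
        (integrableOn_of_bounded2 (((pd3_continuous hv).norm).pow 2) hPb) hIG'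
        (hQm.prod (hSm i)) ?_
      exact fun p _ => le_add_of_nonneg_left (sq_nonneg _)
    · obtain ⟨y₁, y₂, x₁, x₂, _, _, _, hwidth, hTdef, hzero⟩ := h2
      refine (strip2 hv hwidth (hSm i) (hSb i) hTdef hzero).trans
        (mul_le_mul_of_nonneg_left ?_ (sq_nonneg L))
      refine setIntegral_mono_on
        (integrableOn_of_bounded2 (((pd2_continuous hv).norm).pow 2) hPb) hIG'
        (hQm.prod (hSm i)) ?_
      exact fun p _ => le_add_of_nonneg_right (sq_nonneg _)
  have hdiffm : MeasurableSet (ω \ ωδ) := hωm.diff hωδm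
  have hdisj : Disjoint (Q ×ˢ ωδ) (Q ×ˢ (ω \ ωδ)) := by
    rw [Set.disjoint_left]
    rintro p ⟨_, hp2⟩ ⟨_, hp2'⟩
    exact hp2'.2 hp2
  have hsplit : (∫ p in Q ×ˢ ωδ, ‖v p‖ ^ 2) + (∫ p in Q ×ˢ (ω \ ωδ), ‖v p‖ ^ 2)
      = ∫ p in Q ×ˢ ω, ‖v p‖ ^ 2 := by
    have h := setIntegral_union (μ := volume) (f := fun p : ℝ × ℝ × ℝ => ‖v p‖ ^ 2) hdisj
      (hQm.prod hdiffm) (hIv.mono_set (Set.prod_mono_right hωδ))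
      (hIv.mono_set (Set.prod_mono_right Set.diff_subset))
    rw [← Set.prod_union, Set.union_diff_cancel hωδ] at h
    exact h.symm
  have hprodU : Q ×ˢ (ω \ ωδ) = ⋃ i, Q ×ˢ S i := by rw [hScover, Set.prod_iUnion]
  have hdisj' : Pairwise (Function.onFun Disjoint fun i => Q ×ˢ S i) := by
    intro i j hij
    rw [Function.onFun, Set.disjoint_left]
    rintro p ⟨_, hp2⟩ ⟨_, hp2'⟩
    exact Set.disjoint_left.1 (hSdisj hij) hp2 hp2'
  have hsum_v : ∫ p in Q ×ˢ (ω \ ωδ), ‖v p‖ ^ 2 = ∑ i, ∫ p in Q ×ˢ S i, ‖v p‖ ^ 2 := by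
    rw [hprodU, integral_iUnion (fun i => hQm.prod (hSm i)) hdisj'
      (by rw [← hprodU]; exact hIv.mono_set (Set.prod_mono_right Set.diff_subset)),
      tsum_fintype]
  have hsum_G : ∫ p in Q ×ˢ (ω \ ωδ), (‖pd2 v p‖ ^ 2 + ‖pd3 v p‖ ^ 2)
      = ∑ i, ∫ p in Q ×ˢ S i, (‖pd2 v p‖ ^ 2 + ‖pd3 v p‖ ^ 2) := by
    rw [hprodU, integral_iUnion (fun i => hQm.prod (hSm i)) hdisj'
      (by rw [← hprodU]; exact hIG.mono_set (Set.prod_mono_right Set.diff_subset)),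
      tsum_fintype]
  have h1 : ∫ p in Q ×ˢ (ω \ ωδ), ‖v p‖ ^ 2
      ≤ L ^ 2 * ∫ p in Q ×ˢ (ω \ ωδ), (‖pd2 v p‖ ^ 2 + ‖pd3 v p‖ ^ 2) := by
    rw [hsum_v, hsum_G, Finset.mul_sum]
    exact Finset.sum_le_sum fun i _ => key i
  have h2 : ∫ p in Q ×ˢ (ω \ ωδ), (‖pd2 v p‖ ^ 2 + ‖pd3 v p‖ ^ 2)
      ≤ ∫ p in Q ×ˢ ω, (‖pd2 v p‖ ^ 2 + ‖pd3 v p‖ ^ 2) := by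
    apply setIntegral_mono_set hIG (Filter.Eventually.of_forall fun p => hG0 p)
    exact (Set.prod_mono_right Set.diff_subset).eventuallyLE
  set A : ℝ := ∫ p in Q ×ˢ ω, ‖v p‖ ^ 2 with hA
  set B : ℝ := ∫ p in Q ×ˢ ω, (‖pd2 v p‖ ^ 2 + ‖pd3 v p‖ ^ 2) with hB
  have h3 := mul_le_mul_of_nonneg_left h2 (sq_nonneg L)
  have hmain : 1 / 2 * A < L ^ 2 * B := by linarith
  rw [ge_iff_le, div_mul_eq_mul_div, one_mul, div_le_iff₀ (by positivity)]
  have h4 : A < 2 * (L ^ 2 * B) := by linarith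
  have heq : 2 * (L ^ 2 * B) = B * (2 * C' ^ 2 * δ ^ 2) := by rw [hLdef]; ring
  linarith
end
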